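/- arXiv:1610.01896 — 2 statements merged into one kernel-verified Lean document; each statement's English description precedes it below -/
import Mathlib

section
/- Let S be an m×m real symmetric positive semidefinite matrix and P an m×m real symmetric matrix with P·P = P and P ≠ I_m, such that S·P = P and the eigenspace {x ∈ ℝ^m : Sx = x} equals the column space of P. Then the largest eigenvalue of the symmetric matrix S − P equals the largest eigenvalue of S among eigenvalues different from 1. -/
open Matrix

/-- Membership in the real spectrum of a real matrix is equivalent to having an eigenvector. -/
lemma mem_spectrum_iff_exists_eigenvector {m : ℕ} (M : Matrix (Fin m) (Fin m) ℝ) (μ : ℝ) :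
    μ ∈ spectrum ℝ M ↔ ∃ v : Fin m → ℝ, v ≠ 0 ∧ M.mulVec v = μ • v := by
  rw [spectrum.mem_iff, Matrix.isUnit_iff_isUnit_det, isUnit_iff_ne_zero, not_ne_iff,
    ← Matrix.exists_mulVec_eq_zero_iff]
  constructor
  · rintro ⟨v, hv, hveq⟩
    refine ⟨v, hv, ?_⟩
    rw [Algebra.algebraMap_eq_smul_one, Matrix.sub_mulVec, Matrix.smul_mulVec,
      Matrix.one_mulVec, sub_eq_zero] at hveq
    exact hveq.symm
  · rintro ⟨v, hv, hveq⟩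
    refine ⟨v, hv, ?_⟩
    rw [Algebra.algebraMap_eq_smul_one, Matrix.sub_mulVec, Matrix.smul_mulVec,
      Matrix.one_mulVec, sub_eq_zero, hveq]

/-- If `S` is symmetric PSD, `P` is a symmetric idempotent with `P ≠ I`, `S P = P`, and
the `1`-eigenspace of `S` equals the column space of `P`, then the largest eigenvalue of
`S − P` equals the largest eigenvalue of `S` among eigenvalues different from `1`. -/
theorem lambdaMax_S_sub_P_eq_lambda2
    (m : ℕ) (hm : 0 < m) (S P : Matrix (Fin m) (Fin m) ℝ)
    (hSsymm : Sᵀ = S) (hSpsd : ∀ x : Fin m → ℝ, 0 ≤ dotProduct x (S.mulVec x))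
    (hPsymm : Pᵀ = P) (hPidem : P * P = P) (hPne : P ≠ 1)
    (hSP : S * P = P)
    (heig : {x : Fin m → ℝ | S.mulVec x = x} = Set.range P.mulVec) :
    sSup (spectrum ℝ (S - P)) = sSup (spectrum ℝ S \ {1}) := by
  classical
  -- P * S = P
  have hPS : P * S = P := by
    rw [← hPsymm, ← hSsymm, ← Matrix.transpose_mul, hSP, hPsymm]
  set T : Set ℝ := spectrum ℝ S \ {1} with hT
  set L : Set ℝ := spectrum ℝ (S - P) with hL
  -- T ⊆ L
  have hTL : T ⊆ L := by
    rintro μ ⟨hμS, hμ1⟩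
    have hμ1' : μ ≠ 1 := hμ1
    obtain ⟨v, hv0, hv⟩ := (mem_spectrum_iff_exists_eigenvector S μ).mp hμS
    have hPv : P.mulVec v = 0 := by
      have h1 : P.mulVec (S.mulVec v) = P.mulVec v := by
        rw [Matrix.mulVec_mulVec, hPS]
      rw [hv, Matrix.mulVec_smul] at h1
      have h2 : (μ - 1) • P.mulVec v = 0 := by
        rw [sub_smul, one_smul, h1, sub_self]
      rcases smul_eq_zero.mp h2 with h | h
      · exact absurd (by linarith [sub_eq_zero.mp h]) hμ1'
      · exact h
    refine (mem_spectrum_iff_exists_eigenvector (S - P) μ).mpr ⟨v, hv0, ?_⟩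
    rw [Matrix.sub_mulVec, hv, hPv, sub_zero]
  -- L ⊆ T ∪ {0}
  have hLT : L ⊆ T ∪ {0} := by
    rintro μ hμ
    obtain ⟨v, hv0, hv⟩ := (mem_spectrum_iff_exists_eigenvector (S - P) μ).mp hμ
    by_cases hμ0 : μ = 0
    · exact Or.inr hμ0
    · left
      have hPv : P.mulVec v = 0 := by
        have h1 : P.mulVec ((S - P).mulVec v) = 0 := by
          rw [Matrix.mulVec_mulVec, Matrix.mul_sub, hPS, hPidem, sub_self,
            Matrix.zero_mulVec]
        rw [hv, Matrix.mulVec_smul] at h1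
        rcases smul_eq_zero.mp h1 with h | h
        · exact absurd h hμ0
        · exact h
      have hSv : S.mulVec v = μ • v := by
        have := hv
        rw [Matrix.sub_mulVec, hPv, sub_zero] at this
        exact this
      have hμS : μ ∈ spectrum ℝ S :=
        (mem_spectrum_iff_exists_eigenvector S μ).mpr ⟨v, hv0, hSv⟩
      refine ⟨hμS, ?_⟩
      intro hμ1
      have hμ1' : μ = 1 := hμ1
      have hvmem : v ∈ {x : Fin m → ℝ | S.mulVec x = x} := by
        simp only [Set.mem_setOf_eq, hSv, hμ1', one_smul]
      rw [heig] at hvmem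
      obtain ⟨w, hw⟩ := hvmem
      have : P.mulVec v = v := by
        rw [← hw, Matrix.mulVec_mulVec, hPidem]
      rw [hPv] at this
      exact hv0 this.symm
  -- L is nonempty since S - P is Hermitian (real symmetric)
  have hHerm : (S - P).IsHermitian := by
    rw [Matrix.IsHermitian]
    ext i j
    simp only [Matrix.conjTranspose_apply, Matrix.sub_apply, star_trivial]
    rw [show S j i = Sᵀ i j from rfl, show P j i = Pᵀ i j from rfl, hSsymm, hPsymm]
  have hLne : L.Nonempty :=
    ⟨hHerm.eigenvalues ⟨0, hm⟩, hHerm.eigenvalues_mem_spectrum_real ⟨0, hm⟩⟩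
  -- elements of T are nonnegative
  have hTnn : ∀ μ ∈ T, (0:ℝ) ≤ μ := by
    rintro μ ⟨hμS, -⟩
    obtain ⟨v, hv0, hv⟩ := (mem_spectrum_iff_exists_eigenvector S μ).mp hμS
    have hpos : 0 < dotProduct v v := by
      rcases lt_or_eq_of_le (by simpa using dotProduct_star_self_nonneg v) with h | h
      · exact h
      · exact absurd (dotProduct_self_eq_zero.mp h.symm) hv0
    have hnn : 0 ≤ μ * dotProduct v v := by
      have := hSpsd v
      rwa [hv, dotProduct_smul, smul_eq_mul] at this
    exact (mul_nonneg_iff_of_pos_right hpos).mp hnn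
  -- bounded above
  have hbddL : BddAbove L := (Matrix.finite_spectrum (S - P)).bddAbove
  have hbddT : BddAbove T :=
    ((Matrix.finite_spectrum S).subset (Set.diff_subset)).bddAbove
  rcases T.eq_empty_or_nonempty with hTe | hTne
  · -- T empty: L ⊆ {0}, L nonempty, so L = {0}
    have hLsub : L ⊆ {0} := by
      intro x hx
      rcases hLT hx with h | h
      · rw [hTe] at h; exact absurd h (Set.notMem_empty x)
      · exact h
    have hLeq : L = {0} := (Set.subset_singleton_iff_eq.mp hLsub).resolve_left
      (Set.nonempty_iff_ne_empty.mp hLne)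
    rw [hTe, hLeq, Real.sSup_empty, csSup_singleton]
  · apply le_antisymm
    · -- sSup L ≤ sSup T
      obtain ⟨t, ht⟩ := hTne
      have h0T : (0:ℝ) ≤ sSup T := le_trans (hTnn t ht) (le_csSup hbddT ht)
      refine csSup_le hLne ?_
      intro x hx
      rcases hLT hx with h | h
      · exact le_csSup hbddT h
      · rw [Set.mem_singleton_iff.mp h]; exact h0T
    · exact csSup_le_csSup hbddL hTne hTL
end

section
/- Let S be an m×m real symmetric positive semidefinite matrix all of whose eigenvalues are at most 1, and let P be an m×m real symmetric matrix with P·P = P, such that S·P = P and the eigenspace {x ∈ ℝ^m : Sx = x} equals the column space of P. Then every eigenvalue of the symmetric matrix S − P is strictly less than 1; in particular λ_max(S − P) < 1. -/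
open Matrix

lemma matrix_mem_spectrum_exists_eigvec {m : ℕ} (A : Matrix (Fin m) (Fin m) ℝ) {μ : ℝ}
    (h : μ ∈ spectrum ℝ A) : ∃ x : Fin m → ℝ, x ≠ 0 ∧ A.mulVec x = μ • x := by
  set f : Module.End ℝ (Fin m → ℝ) := Matrix.toLinAlgEquiv' A with hf
  have h' : μ ∈ spectrum ℝ f := by
    have := AlgEquiv.spectrum_eq (Matrix.toLinAlgEquiv' : Matrix (Fin m) (Fin m) ℝ ≃ₐ[ℝ] _) A
    rw [hf]; rw [show spectrum ℝ (Matrix.toLinAlgEquiv' A) = spectrum ℝ A from this]; exact h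
  have hev : f.HasEigenvalue μ := Module.End.HasEigenvalue.of_mem_spectrum h'
  obtain ⟨x, hx⟩ := hev.exists_hasEigenvector
  refine ⟨x, hx.2, ?_⟩
  have := hx.apply_eq_smul
  rwa [hf, Matrix.toLinAlgEquiv'_apply] at this

lemma matrix_eigvec_mem_spectrum {m : ℕ} (A : Matrix (Fin m) (Fin m) ℝ) {μ : ℝ}
    {x : Fin m → ℝ} (hx : x ≠ 0) (h : A.mulVec x = μ • x) : μ ∈ spectrum ℝ A := by
  set f : Module.End ℝ (Fin m → ℝ) := Matrix.toLinAlgEquiv' A with hf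
  have hfs : spectrum ℝ f = spectrum ℝ A :=
    AlgEquiv.spectrum_eq (Matrix.toLinAlgEquiv' : Matrix (Fin m) (Fin m) ℝ ≃ₐ[ℝ] _) A
  rw [← hfs]
  have : f.HasEigenvalue μ :=
    Module.End.hasEigenvalue_of_hasEigenvector ⟨by
      rw [Module.End.mem_eigenspace_iff, hf, Matrix.toLinAlgEquiv'_apply]; exact h, hx⟩
  exact this.mem_spectrum

/-- If `S` is symmetric PSD with all eigenvalues at most `1`, `P` is a symmetric
idempotent with `S P = P` whose column space equals the `1`-eigenspace of `S`, then
every eigenvalue of `S − P` is strictly less than `1`; in particular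
`λ_max(S − P) < 1`. -/
theorem lambdaMax_S_sub_P_lt_one
    (m : ℕ) (hm : 0 < m) (S P : Matrix (Fin m) (Fin m) ℝ)
    (hSsymm : Sᵀ = S) (hSpsd : ∀ x : Fin m → ℝ, 0 ≤ dotProduct x (S.mulVec x))
    (hSle : ∀ lam ∈ spectrum ℝ S, lam ≤ 1)
    (hPsymm : Pᵀ = P) (hPidem : P * P = P)
    (hSP : S * P = P)
    (heig : {x : Fin m → ℝ | S.mulVec x = x} = Set.range P.mulVec) :
    (∀ mu ∈ spectrum ℝ (S - P), mu < 1) ∧ sSup (spectrum ℝ (S - P)) < 1 := by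
  have hPS : P * S = P := by
    have := congrArg Matrix.transpose hSP
    rwa [Matrix.transpose_mul, hSsymm, hPsymm] at this
  have hPA : P * (S - P) = 0 := by
    rw [Matrix.mul_sub, hPS, hPidem, sub_self]
  have key : ∀ mu ∈ spectrum ℝ (S - P), mu < 1 := by
    intro mu hmu
    obtain ⟨x, hx0, hx⟩ := matrix_mem_spectrum_exists_eigvec (S - P) hmu
    by_cases hmu0 : mu = 0
    · rw [hmu0]; norm_num
    · -- P x = 0
      have hPx : P.mulVec x = 0 := by
        have h1 : P.mulVec ((S - P).mulVec x) = 0 := by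
          rw [Matrix.mulVec_mulVec, hPA, Matrix.zero_mulVec]
        rw [hx, Matrix.mulVec_smul] at h1
        exact (smul_eq_zero.mp h1).resolve_left hmu0
      have hSx : S.mulVec x = mu • x := by
        have : (S - P).mulVec x = S.mulVec x - P.mulVec x := by
          rw [Matrix.sub_mulVec]
        rw [this, hPx, sub_zero] at hx
        exact hx
      have hmuS : mu ∈ spectrum ℝ S := matrix_eigvec_mem_spectrum S hx0 hSx
      have hle : mu ≤ 1 := hSle mu hmuS
      rcases lt_or_eq_of_le hle with h | h
      · exact h
      · exfalso
        have hx1 : S.mulVec x = x := by rw [hSx, h, one_smul]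
        have : x ∈ Set.range P.mulVec := heig ▸ hx1
        obtain ⟨y, hy⟩ := this
        have : P.mulVec x = x := by
          rw [← hy, Matrix.mulVec_mulVec, hPidem]
        exact hx0 (by rw [← this, hPx])
  refine ⟨key, ?_⟩
  have hherm : (S - P).IsHermitian := by
    unfold Matrix.IsHermitian
    rw [Matrix.conjTranspose_eq_transpose_of_trivial, Matrix.transpose_sub, hSsymm, hPsymm]
  have hne : (spectrum ℝ (S - P)).Nonempty :=
    ⟨hherm.eigenvalues ⟨0, hm⟩, hherm.eigenvalues_mem_spectrum_real ⟨0, hm⟩⟩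
  have hfin : (spectrum ℝ (S - P)).Finite := Matrix.finite_spectrum _
  have := hne.csSup_mem hfin
  exact key _ this
end
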